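/- Suppose that for every pair of integers n ≤ m with n sufficiently large and m ≤ C'n there exists a graph H on disjoint cliques A (size m) and B (size n) in which every vertex has at most (ε/2)·n non-neighbors and which has no K_{s,t}-minor whenever n ≤ s and m ≤ (1−ε)(s+t). Then for every pair s ≤ t ≤ Cs with s sufficiently large there exists a graph with no K_{s,t}-minor and list chromatic number greater than (1−ε)(2s+t). -/

import Mathlib

set_option maxHeartbeats 1000000

namespace Stmt15Aux



def Col (q k : ℕ) : Type :=
  {f : Fin q → ℕ // ∀ v : Fin q, f v ∈ Finset.Ico (v.val * k) (v.val * k + k)}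

def Vtx (q k : ℕ) (Bf : Finset (Fin q)) : Type :=
  {x : Fin q // x ∈ Bf} ⊕ (Col q k × {x : Fin q // x ∉ Bf})

variable {q k : ℕ} {Bf : Finset (Fin q)}

def emb (c : Col q k) (v : Fin q) : Vtx q k Bf :=
  if h : v ∈ Bf then Sum.inl ⟨v, h⟩ else Sum.inr (c, ⟨v, h⟩)

lemma emb_of_mem (c : Col q k) {v : Fin q} (h : v ∈ Bf) :
    emb (Bf := Bf) c v = Sum.inl ⟨v, h⟩ := dif_pos h

lemma emb_of_not_mem (c : Col q k) {v : Fin q} (h : v ∉ Bf) :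
    emb (Bf := Bf) c v = Sum.inr (c, ⟨v, h⟩) := dif_neg h

lemma emb_eq_emb {c c' : Col q k} {v w : Fin q}
    (h : emb (Bf := Bf) c v = emb (Bf := Bf) c' w) : v = w ∧ (v ∉ Bf → c = c') := by
  by_cases hv : v ∈ Bf <;> by_cases hw : w ∈ Bf
  · rw [emb_of_mem c hv, emb_of_mem c' hw] at h
    exact ⟨congrArg Subtype.val (Sum.inl.inj h), fun h' => absurd hv h'⟩
  · rw [emb_of_mem c hv, emb_of_not_mem c' hw] at h; exact absurd h (by simp)
  · rw [emb_of_not_mem c hv, emb_of_mem c' hw] at h; exact absurd h (by simp)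
  · rw [emb_of_not_mem c hv, emb_of_not_mem c' hw] at h
    obtain ⟨h1, h2⟩ := Prod.mk.injEq .. ▸ Sum.inr.inj h
    exact ⟨congrArg Subtype.val h2, fun _ => h1⟩

lemma emb_inj (c : Col q k) : Function.Injective (emb (Bf := Bf) c) :=
  fun _ _ h => (emb_eq_emb h).1

def GG (H : SimpleGraph (Fin q)) (k : ℕ) (Bf : Finset (Fin q)) :
    SimpleGraph (Vtx q k Bf) where
  Adj x y := ∃ (c : Col q k) (v w : Fin q), emb c v = x ∧ emb c w = y ∧ H.Adj v w
  symm := by constructor; rintro x y ⟨c, v, w, h1, h2, h3⟩; exact ⟨c, w, v, h2, h1, h3.symm⟩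
  loopless := by
    constructor; rintro x ⟨c, v, w, h1, h2, h3⟩
    exact h3.ne (emb_inj c (h1.trans h2.symm))

lemma adj_emb {H : SimpleGraph (Fin q)} {c : Col q k} {v w : Fin q} :
    (GG H k Bf).Adj (emb c v) (emb c w) ↔ H.Adj v w := by
  constructor
  · rintro ⟨c', v', w', h1, h2, h3⟩
    rwa [(emb_eq_emb h1).1, (emb_eq_emb h2).1] at h3
  · intro h; exact ⟨c, v, w, rfl, rfl, h⟩

lemma adj_cross {H : SimpleGraph (Fin q)} {c0 : Col q k} {x y : Vtx q k Bf}
    (h : (GG H k Bf).Adj x y) (hx : x ∉ Set.range (emb (Bf := Bf) c0))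
    (hy : y ∈ Set.range (emb (Bf := Bf) c0)) :
    ∃ (b : Fin q) (hb : b ∈ Bf), y = Sum.inl ⟨b, hb⟩ := by
  obtain ⟨c, v, w, rfl, rfl, hvw⟩ := h
  have hv : v ∉ Bf := by
    intro hv; exact hx ⟨v, (emb_of_mem c0 hv).trans (emb_of_mem c hv).symm⟩
  by_cases hw : w ∈ Bf
  · exact ⟨w, hw, (emb_of_mem c hw).symm ▸ rfl⟩
  · exfalso
    obtain ⟨u, hu⟩ := hy
    have h2 := (emb_eq_emb hu).2
    have h1 := (emb_eq_emb hu).1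
    subst h1
    have : c0 = c := h2 hw
    subst this
    exact hx ⟨v, rfl⟩

def cp : Vtx q k Bf → Option (Col q k)
  | Sum.inl _ => none
  | Sum.inr (c, _) => some c

lemma cp_eq_some {x : Vtx q k Bf} {c : Col q k} (h : cp x = some c) :
    ∃ (a : Fin q) (ha : a ∉ Bf), x = Sum.inr (c, ⟨a, ha⟩) ∧ emb (Bf := Bf) c a = x := by
  match x with
  | Sum.inl b => exact absurd h (by simp [cp])
  | Sum.inr (c', a) =>
    have : c' = c := by simpa [cp] using h
    subst this
    exact ⟨a.val, a.2, rfl, by rw [emb_of_not_mem _ a.2]⟩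

lemma adj_cp {H : SimpleGraph (Fin q)} {x y : Vtx q k Bf} (h : (GG H k Bf).Adj x y) :
    cp x = none ∨ cp y = none ∨ cp x = cp y := by
  obtain ⟨c, v, w, rfl, rfl, _⟩ := h
  by_cases hv : v ∈ Bf
  · left; rw [emb_of_mem c hv]; rfl
  · by_cases hw : w ∈ Bf
    · right; left; rw [emb_of_mem c hw]; rfl
    · right; right; rw [emb_of_not_mem c hv, emb_of_not_mem c hw]; rfl





lemma walk_const {W' α : Type*} {G : SimpleGraph W'} {X : Set W'} (f : W' → α)
    (hf : ∀ x ∈ X, ∀ y ∈ X, G.Adj x y → f x = f y) :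
    ∀ {a b : X}, (G.induce X).Walk a b → f a = f b := by
  intro a b p
  induction p with
  | nil => rfl
  | @cons u v w h p ih => exact (hf u.val u.2 v.val v.2 h).trans ih

lemma rtg_reachable {V : Type*} {H : SimpleGraph V} {Y : Set V} {v w : V}
    (h : Relation.ReflTransGen (fun a b => a ∈ Y ∧ b ∈ Y ∧ H.Adj a b) v w) :
    ∀ (hv : v ∈ Y) (hw : w ∈ Y), (H.induce Y).Reachable ⟨v, hv⟩ ⟨w, hw⟩ := by
  induction h with
  | refl => intro hv hw; exact SimpleGraph.Reachable.refl _
  | @tail b c _ step ih =>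
    intro hv hw
    exact (ih hv step.1).trans (SimpleGraph.Adj.reachable (step.2.2 : (H.induce Y).Adj ⟨b, step.1⟩ ⟨c, hw⟩))

lemma pullback_walk {V W' : Type*} {G : SimpleGraph W'} {H : SimpleGraph V}
    {ψ : V → W'} {Bs : Set V}
    (hinj : Function.Injective ψ)
    (hadj : ∀ v w, G.Adj (ψ v) (ψ w) → H.Adj v w)
    (hcross : ∀ x y, G.Adj x y → x ∉ Set.range ψ → y ∈ Set.range ψ → ∃ b ∈ Bs, ψ b = y)
    (hclq : ∀ b ∈ Bs, ∀ b' ∈ Bs, b ≠ b' → H.Adj b b')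
    {X : Set W'} {a b : X} (p : (G.induce X).Walk a b) {w : V} (hw : ψ w = (b : W')) :
    (∀ v, ψ v = (a : W') →
      Relation.ReflTransGen (fun v₁ v₂ => ψ v₁ ∈ X ∧ ψ v₂ ∈ X ∧ H.Adj v₁ v₂) v w) ∧
    ((a : W') ∉ Set.range ψ → ∃ u ∈ Bs, ψ u ∈ X ∧
      Relation.ReflTransGen (fun v₁ v₂ => ψ v₁ ∈ X ∧ ψ v₂ ∈ X ∧ H.Adj v₁ v₂) u w) := by
  induction p with
  | nil =>
    constructor
    · intro v hv
      have : v = w := hinj (hv.trans hw.symm)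
      subst this
      exact Relation.ReflTransGen.refl
    · intro ha; exact absurd ⟨w, hw⟩ ha
  | @cons a d b h p ih =>
    have ih := ih hw
    have hGadj : G.Adj (a : W') (d : W') := h
    constructor
    · intro v hv
      by_cases hd : (d : W') ∈ Set.range ψ
      · obtain ⟨u, hu⟩ := hd
        refine Relation.ReflTransGen.head ⟨hv ▸ a.2, hu ▸ d.2, hadj v u ?_⟩ (ih.1 u hu)
        rw [hv, hu]; exact hGadj
      · obtain ⟨b', hb', hψb'⟩ := hcross (d : W') (a : W') hGadj.symm hd ⟨v, hv⟩
        have hvb : v = b' := hinj (hv.trans hψb'.symm)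
        obtain ⟨u, hu, huX, hr⟩ := ih.2 hd
        by_cases hvu : v = u
        · subst hvu; exact hr
        · exact Relation.ReflTransGen.head
            ⟨hv ▸ a.2, huX, hclq v (hvb ▸ hb') u hu hvu⟩ hr
    · intro ha
      by_cases hd : (d : W') ∈ Set.range ψ
      · obtain ⟨b', hb', hψb'⟩ := hcross (a : W') (d : W') hGadj ha hd
        exact ⟨b', hb', hψb' ▸ d.2, ih.1 b' hψb'⟩
      · exact ih.2 hd

lemma pullback_connected {V W' : Type*} {G : SimpleGraph W'} {H : SimpleGraph V}
    {ψ : V → W'} {Bs : Set V}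
    (hinj : Function.Injective ψ)
    (hadj : ∀ v w, G.Adj (ψ v) (ψ w) → H.Adj v w)
    (hcross : ∀ x y, G.Adj x y → x ∉ Set.range ψ → y ∈ Set.range ψ → ∃ b ∈ Bs, ψ b = y)
    (hclq : ∀ b ∈ Bs, ∀ b' ∈ Bs, b ≠ b' → H.Adj b b')
    {X : Set W'} (hX : (G.induce X).Connected) (hne : (X ∩ Set.range ψ).Nonempty) :
    (H.induce (ψ ⁻¹' X)).Connected := by
  rw [SimpleGraph.connected_iff]
  constructor
  · intro u v
    obtain ⟨p⟩ := hX.preconnected ⟨ψ u.val, u.2⟩ ⟨ψ v.val, v.2⟩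
    have key := (pullback_walk hinj hadj hcross hclq p (w := v.val) rfl).1 u.val rfl
    exact rtg_reachable key u.2 v.2
  · obtain ⟨x, hx1, v, rfl⟩ := hne
    exact ⟨⟨v, hx1⟩⟩

lemma pullback_cross {V W' : Type*} {G : SimpleGraph W'} {H : SimpleGraph V}
    {ψ : V → W'} {Bs : Set V}
    (hinj : Function.Injective ψ)
    (hadj : ∀ v w, G.Adj (ψ v) (ψ w) → H.Adj v w)
    (hcross : ∀ x y, G.Adj x y → x ∉ Set.range ψ → y ∈ Set.range ψ → ∃ b ∈ Bs, ψ b = y)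
    (hclq : ∀ b ∈ Bs, ∀ b' ∈ Bs, b ≠ b' → H.Adj b b')
    {X : Set W'} (hcon : (G.induce X).Connected)
    {x : W'} (hx : x ∈ X) (hxr : x ∉ Set.range ψ)
    {w : V} (hw : ψ w ∈ X) :
    ∃ u ∈ Bs, ψ u ∈ X := by
  obtain ⟨p⟩ := hcon.preconnected ⟨x, hx⟩ ⟨ψ w, hw⟩
  obtain ⟨u, hu, huX, -⟩ := (pullback_walk hinj hadj hcross hclq p (w := w) rfl).2 hxr
  exact ⟨u, hu, huX⟩





lemma col_injective (c : Col q k) : Function.Injective c.val := by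
  intro v w h
  by_contra hne
  have hv := Finset.mem_Ico.mp (c.2 v)
  have hw := Finset.mem_Ico.mp (c.2 w)
  have hvw : v.val ≠ w.val := fun h' => hne (Fin.ext h')
  rcases Nat.lt_or_ge v.val w.val with hlt | hge
  · have : v.val * k + k ≤ w.val * k := by
      calc v.val * k + k = (v.val + 1) * k := by ring
        _ ≤ w.val * k := Nat.mul_le_mul_right k hlt
    omega
  · have hlt : w.val < v.val := by omega
    have : w.val * k + k ≤ v.val * k := by
      calc w.val * k + k = (w.val + 1) * k := by ring
        _ ≤ v.val * k := Nat.mul_le_mul_right k hlt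
    omega

def mkCol (hk : 1 ≤ k) (g : {x : Fin q // x ∈ Bf} → ℕ)
    (hg : ∀ b : {x : Fin q // x ∈ Bf}, g b ∈ Finset.Ico (b.val.val * k) (b.val.val * k + k)) :
    Col q k :=
  ⟨fun v => if h : v ∈ Bf then g ⟨v, h⟩ else v.val * k, by
    intro v
    show (if h : v ∈ Bf then g ⟨v, h⟩ else v.val * k) ∈ _
    by_cases h : v ∈ Bf
    · rw [dif_pos h]; exact hg ⟨v, h⟩
    · rw [dif_neg h]; simp [Finset.mem_Ico]; omega⟩

lemma mkCol_mem (hk : 1 ≤ k) (g : {x : Fin q // x ∈ Bf} → ℕ) (hg) {v : Fin q} (h : v ∈ Bf) :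
    (mkCol hk g hg).val v = g ⟨v, h⟩ := dif_pos h

def LL (H : SimpleGraph (Fin q)) [DecidableRel H.Adj] (k m : ℕ) (Bf : Finset (Fin q)) :
    Vtx q k Bf → Finset ℕ
  | Sum.inl b => Finset.Ico (b.val.val * k) (b.val.val * k + k)
  | Sum.inr (c, a) =>
      ((Bf.filter (fun b => H.Adj a.val b)).image c.val) ∪
        Finset.Ico (q * k) (q * k + (m - 1))

lemma LL_inl (H : SimpleGraph (Fin q)) [DecidableRel H.Adj] (k m : ℕ) (Bf : Finset (Fin q))
    (b : {x : Fin q // x ∈ Bf}) :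
    LL H k m Bf (Sum.inl b) = Finset.Ico (b.val.val * k) (b.val.val * k + k) := rfl

lemma LL_inr (H : SimpleGraph (Fin q)) [DecidableRel H.Adj] (k m : ℕ) (Bf : Finset (Fin q))
    (c : Col q k) (a : {x : Fin q // x ∉ Bf}) :
    LL H k m Bf (Sum.inr (c, a)) =
      ((Bf.filter (fun b => H.Adj a.val b)).image c.val) ∪
        Finset.Ico (q * k) (q * k + (m - 1)) := rfl

lemma LL_card (H : SimpleGraph (Fin q)) [DecidableRel H.Adj] (k m : ℕ) (Bf : Finset (Fin q))
    (e : ℕ)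
    (hfilter : ∀ a : {x : Fin q // x ∉ Bf},
      Bf.card - e ≤ (Bf.filter (fun b => H.Adj a.val b)).card)
    (hk : k ≤ m + Bf.card - 1 - e) (hm : 1 ≤ m) (he : e ≤ Bf.card - 1) :
    ∀ v, k ≤ (LL H k m Bf v).card := by
  intro v
  match v with
  | Sum.inl b =>
    rw [LL_inl, Nat.card_Ico]; omega
  | Sum.inr (c, a) =>
    rw [LL_inr]
    have hdisj : Disjoint ((Bf.filter (fun b => H.Adj a.val b)).image c.val)
        (Finset.Ico (q * k) (q * k + (m - 1))) := by
      rw [Finset.disjoint_left]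
      intro x hx hx'
      obtain ⟨b, hb, rfl⟩ := Finset.mem_image.mp hx
      have h1 := Finset.mem_Ico.mp (c.2 b)
      have h2 := Finset.mem_Ico.mp hx'
      have hbq : b.val + 1 ≤ q := b.isLt
      have : b.val * k + k ≤ q * k := by
        calc b.val * k + k = (b.val + 1) * k := by ring
          _ ≤ q * k := Nat.mul_le_mul_right k hbq
      omega
    rw [Finset.card_union_of_disjoint hdisj, Nat.card_Ico,
      Finset.card_image_of_injOn (Function.Injective.injOn (col_injective c))]
    have h1 := hfilter a
    omega



end Stmt15Aux

def HasKstMinor {V : Type*} (G : SimpleGraph V) (s t : ℕ) : Prop :=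
  ∃ (Z : Fin s → Set V) (W : Fin t → Set V),
    (∀ i, (Z i).Nonempty) ∧ (∀ j, (W j).Nonempty) ∧
    (∀ i j, i ≠ j → Disjoint (Z i) (Z j)) ∧
    (∀ i j, i ≠ j → Disjoint (W i) (W j)) ∧
    (∀ i j, Disjoint (Z i) (W j)) ∧
    (∀ i, (G.induce (Z i)).Connected) ∧
    (∀ j, (G.induce (W j)).Connected) ∧
    (∀ i j, ∃ x ∈ Z i, ∃ y ∈ W j, G.Adj x y)

def Choosable {V : Type*} (G : SimpleGraph V) (k : ℕ) : Prop :=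
  ∀ L : V → Finset ℕ, (∀ v, k ≤ (L v).card) →
    ∃ c : V → ℕ, (∀ v, c v ∈ L v) ∧ ∀ u v, G.Adj u v → c u ≠ c v

open Stmt15Aux

/-- Reduction step of the main theorem: if for every pair `n ≤ m` with `n`
sufficiently large and `m ≤ C'n` (where `C' = 2C + 2`) there is a graph `H` on
disjoint cliques `A` (size `m`) and `B` (size `n`) in which every vertex has at
most `(ε/2)·n` non-neighbors and which has no `K_{s,t}`-minor whenever `n ≤ s ≤ t`
and `m ≤ (1−ε)(s+t)`, then for all `s ≤ t ≤ Cs` with `s` sufficiently large there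
is a graph with no `K_{s,t}`-minor whose list chromatic number exceeds
`(1−ε)(2s+t)`. -/
theorem stmt15 (ε C C' : ℝ) (hε : 0 < ε ∧ ε < 1 / 2) (hC : 1 ≤ C) (hC' : C' = 2 * C + 2)
    (hyp : ∃ n₁ : ℕ, ∀ n m : ℕ, n₁ ≤ n → n ≤ m → (m : ℝ) ≤ C' * n →
      ∃ (H : SimpleGraph (Fin (m + n))) (A B : Finset (Fin (m + n))),
        A.card = m ∧ B.card = n ∧ Disjoint A B ∧ A ∪ B = Finset.univ ∧
        (∀ x ∈ A, ∀ y ∈ A, x ≠ y → H.Adj x y) ∧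
        (∀ x ∈ B, ∀ y ∈ B, x ≠ y → H.Adj x y) ∧
        (∀ v, (({u | u ≠ v ∧ ¬ H.Adj v u}).ncard : ℝ) ≤ ε / 2 * n) ∧
        (∀ s t : ℕ, 1 ≤ s → s ≤ t → n ≤ s → (m : ℝ) ≤ (1 - ε) * ((s : ℝ) + t) →
          ¬ HasKstMinor H s t)) :
    ∃ N : ℕ, ∀ s t : ℕ, N ≤ s → s ≤ t → (t : ℝ) ≤ C * s →
      ∃ (W : Type) (G : SimpleGraph W), ¬ HasKstMinor G s t ∧
        ∃ k : ℕ, (1 - ε) * (2 * s + t) ≤ (k : ℝ) ∧ ¬ Choosable G k := by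
  classical
  obtain ⟨hε0, hε2⟩ := hε
  obtain ⟨n₁, hyp⟩ := hyp
  refine ⟨max (n₁ + 2) (⌈6 / ε⌉₊ + 4), ?_⟩
  intro s t hs hst htC
  have hs1 : n₁ + 2 ≤ s := le_trans (le_max_left _ _) hs
  have hs2 : ⌈6 / ε⌉₊ + 4 ≤ s := le_trans (le_max_right _ _) hs
  have hs2' : 2 ≤ s := by omega
  have htsR : (s : ℝ) ≤ t := Nat.cast_le.mpr hst
  have hsR2 : (2 : ℝ) ≤ s := by exact_mod_cast hs2'
  have hεs : 6 ≤ ε * s := by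
    have h1 : (6 / ε : ℝ) ≤ ⌈6 / ε⌉₊ := Nat.le_ceil _
    have h2 : ((⌈6 / ε⌉₊ : ℕ) : ℝ) ≤ s := Nat.cast_le.mpr (by omega)
    have h3 := h1.trans h2
    rw [div_le_iff₀ hε0] at h3
    linarith
  set n : ℕ := s - 1 with hn
  have hncast : (n : ℝ) = (s : ℝ) - 1 := by
    rw [hn, Nat.cast_sub (by omega : 1 ≤ s)]; norm_num
  have h1ε : (0 : ℝ) < 1 - ε := by linarith
  have hstR0 : (0 : ℝ) ≤ (s : ℝ) + t := by positivity
  have hpos : (0 : ℝ) ≤ (1 - ε) * ((s : ℝ) + t) := mul_nonneg h1ε.le hstR0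
  set m : ℕ := ⌊(1 - ε) * ((s : ℝ) + t)⌋₊ with hm
  have hmle : (m : ℝ) ≤ (1 - ε) * ((s : ℝ) + t) := Nat.floor_le hpos
  have hmgt : (1 - ε) * ((s : ℝ) + t) < m + 1 := Nat.lt_floor_add_one _
  have hsm : s ≤ m := by
    rw [hm]
    apply Nat.le_floor
    nlinarith [mul_le_mul_of_nonneg_left htsR hε0.le,
      mul_le_mul_of_nonneg_right hε2.le (by positivity : (0:ℝ) ≤ (t:ℝ))]
  have hnm : n ≤ m := by omega
  have hn₁ : n₁ ≤ n := by omega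
  have hmC' : (m : ℝ) ≤ C' * n := by
    rw [hC', hncast]
    have h1 : (m : ℝ) ≤ (s : ℝ) + t := le_trans hmle (by nlinarith)
    nlinarith [mul_nonneg (by linarith : (0:ℝ) ≤ C + 1) (by linarith : (0:ℝ) ≤ (s:ℝ) - 2)]
  obtain ⟨H, A, B, hA, hB, hAB, hABu, hAclq, hBclq, hnon, hminor⟩ := hyp n m hn₁ hnm hmC'
  have hHfree : ¬ HasKstMinor H s t := hminor s t (by omega) hst (by omega) hmle
  set e : ℕ := ⌊ε / 2 * (n : ℝ)⌋₊ with he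
  have henR : (0:ℝ) ≤ ε / 2 * (n : ℝ) := by positivity
  have hen : e ≤ n - 1 := by
    have h1 : e < n := by
      rw [he]
      apply (Nat.floor_lt henR).mpr
      have hn1R : (1 : ℝ) ≤ (n : ℝ) := by rw [hncast]; linarith
      nlinarith
    omega
  set k : ℕ := m + n - 1 - e with hk
  have hm1 : 1 ≤ m := by omega
  have hk1 : 1 ≤ k := by omega
  have hkcast : (k : ℝ) = (m : ℝ) + n - 1 - e := by
    rw [hk, Nat.cast_sub (by omega : e ≤ m + n - 1), Nat.cast_sub (by omega : 1 ≤ m + n)]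
    push_cast; ring
  have hecast : (e : ℝ) ≤ ε / 2 * ((s : ℝ) - 1) := by
    rw [he, ← hncast]; exact Nat.floor_le henR
  have knum : (1 - ε) * (2 * (s:ℝ) + t) ≤ (k : ℝ) := by
    rw [hkcast, hncast]
    linarith [hmgt, hecast, hεs, htsR]
  haveI : DecidableRel H.Adj := Classical.decRel _
  have hnotB : ∀ x : Fin (m + n), x ∉ B ↔ x ∈ A := by
    intro x
    constructor
    · intro hx
      rcases Finset.mem_union.mp (hABu ▸ Finset.mem_univ x) with h | h
      · exact h
      · exact absurd h hx
    · intro hx hB'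
      exact Finset.disjoint_left.mp hAB hx hB'
  refine ⟨Vtx (m + n) k B, GG H k B, ?_, k, knum, ?_⟩
  · -- no K_{s,t} minor
    intro hGm
    obtain ⟨Z, Wt, hZne, hWne, hZd, hWd, hZW, hZc, hWc, hadjZW⟩ := hGm
    apply hHfree
    have hcardB : Fintype.card {x : Fin (m + n) // x ∈ B} = n := by
      exact (Fintype.card_coe B).trans hB
    have hi0 : ∃ i0, ∀ (b : {x : Fin (m + n) // x ∈ B}), Sum.inl b ∉ Z i0 := by
      by_contra hcon
      push_neg at hcon
      choose f hf using hcon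
      have hfinj : Function.Injective f := by
        intro i j hij
        by_contra hne
        exact Set.disjoint_left.mp (hZd i j hne) (hf i) (hij ▸ hf j)
      have hcard := Fintype.card_le_of_injective f hfinj
      rw [hcardB, Fintype.card_fin] at hcard
      omega
    have hj0 : ∃ j0, ∀ (b : {x : Fin (m + n) // x ∈ B}), Sum.inl b ∉ Wt j0 := by
      by_contra hcon
      push_neg at hcon
      choose f hf using hcon
      have hfinj : Function.Injective f := by
        intro i j hij
        by_contra hne
        exact Set.disjoint_left.mp (hWd i j hne) (hf i) (hij ▸ hf j)
      have hcard := Fintype.card_le_of_injective f hfinj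
      rw [hcardB, Fintype.card_fin] at hcard
      omega
    obtain ⟨i0, hi0⟩ := hi0
    obtain ⟨j0, hj0⟩ := hj0
    obtain ⟨x0, hx0⟩ := hZne i0
    have hx0cp : ∃ c0, cp x0 = some c0 := by
      cases x0 with
      | inl b => exact absurd hx0 (hi0 b)
      | inr p => obtain ⟨c, a⟩ := p; exact ⟨c, rfl⟩
    obtain ⟨c0, hc0⟩ := hx0cp
    have hcpconst : ∀ X : Set (Vtx (m + n) k B), (SimpleGraph.induce X (GG H k B)).Connected →
        (∀ (b : {x : Fin (m + n) // x ∈ B}), Sum.inl b ∉ X) →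
        ∀ x ∈ X, ∀ y ∈ X, cp x = cp y := by
      intro X hcon havoid x hx y hy
      obtain ⟨p⟩ := hcon.preconnected ⟨x, hx⟩ ⟨y, hy⟩
      refine walk_const cp ?_ p
      intro x' hx' y' hy' hadj'
      rcases adj_cp hadj' with h | h | h
      · exfalso
        cases x' with
        | inl b => exact havoid b hx'
        | inr p' => obtain ⟨c', a'⟩ := p'; simp [cp] at h
      · exfalso
        cases y' with
        | inl b => exact havoid b hy'
        | inr p' => obtain ⟨c', a'⟩ := p'; simp [cp] at h
      · exact h
    have hZi0sub : ∀ x ∈ Z i0, cp x = some c0 :=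
      fun x hx => (hcpconst _ (hZc i0) hi0 x hx x0 hx0).trans hc0
    have hψinj := emb_inj (Bf := B) c0
    have hψadj : ∀ v w, (GG H k B).Adj (emb c0 v) (emb c0 w) → H.Adj v w :=
      fun v w h => adj_emb.mp h
    have hψcross : ∀ x y, (GG H k B).Adj x y → x ∉ Set.range (emb (Bf := B) c0) →
        y ∈ Set.range (emb (Bf := B) c0) → ∃ b ∈ (↑B : Set (Fin (m + n))), emb c0 b = y := by
      intro x y hxy hx hy
      obtain ⟨b, hb, rfl⟩ := adj_cross hxy hx hy
      exact ⟨b, Finset.mem_coe.mpr hb, emb_of_mem c0 hb⟩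
    have hψclq : ∀ b ∈ (↑B : Set (Fin (m + n))), ∀ b' ∈ (↑B : Set (Fin (m + n))),
        b ≠ b' → H.Adj b b' :=
      fun b hb b' hb' => hBclq b (Finset.mem_coe.mp hb) b' (Finset.mem_coe.mp hb')
    have hZi0V1 : ∀ x ∈ Z i0, x ∈ Set.range (emb (Bf := B) c0) := by
      intro x hx
      obtain ⟨a, ha, -, hemb⟩ := cp_eq_some (hZi0sub x hx)
      exact ⟨a, hemb⟩
    obtain ⟨xa, hxa, ya, hya, hxya⟩ := hadjZW i0 j0
    have hya_cp : cp ya = some c0 := by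
      rcases adj_cp hxya with h | h | h
      · rw [hZi0sub xa hxa] at h; simp [cp] at h
      · exfalso
        cases ya with
        | inl b => exact hj0 b hya
        | inr p' => obtain ⟨c', a'⟩ := p'; simp [cp] at h
      · rw [← h]; exact hZi0sub xa hxa
    have hWj0sub : ∀ y ∈ Wt j0, cp y = some c0 :=
      fun y hy => (hcpconst _ (hWc j0) hj0 y hy ya hya).trans hya_cp
    have hWj0V1 : ∀ y ∈ Wt j0, y ∈ Set.range (emb (Bf := B) c0) := by
      intro y hy
      obtain ⟨a, ha, -, hemb⟩ := cp_eq_some (hWj0sub y hy)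
      exact ⟨a, hemb⟩
    have hWmeet : ∀ j, (Wt j ∩ Set.range (emb (Bf := B) c0)).Nonempty := by
      intro j
      obtain ⟨x, hx, y, hy, hxy⟩ := hadjZW i0 j
      by_cases hyV : y ∈ Set.range (emb (Bf := B) c0)
      · exact ⟨y, hy, hyV⟩
      · exfalso
        obtain ⟨b, hb, hxeq⟩ := adj_cross hxy.symm hyV (hZi0V1 x hx)
        have h1 := hZi0sub x hx
        rw [hxeq] at h1
        simp [cp] at h1
    have hZmeet : ∀ i, (Z i ∩ Set.range (emb (Bf := B) c0)).Nonempty := by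
      intro i
      obtain ⟨x, hx, y, hy, hxy⟩ := hadjZW i j0
      by_cases hxV : x ∈ Set.range (emb (Bf := B) c0)
      · exact ⟨x, hx, hxV⟩
      · exfalso
        obtain ⟨b, hb, hyeq⟩ := adj_cross hxy hxV (hWj0V1 y hy)
        have h1 := hWj0sub y hy
        rw [hyeq] at h1
        simp [cp] at h1
    refine ⟨fun i => (emb (Bf := B) c0) ⁻¹' (Z i), fun j => (emb (Bf := B) c0) ⁻¹' (Wt j),
      ?_, ?_, ?_, ?_, ?_, ?_, ?_, ?_⟩
    · intro i; obtain ⟨x, hx, v, rfl⟩ := hZmeet i; exact ⟨v, hx⟩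
    · intro j; obtain ⟨y, hy, v, rfl⟩ := hWmeet j; exact ⟨v, hy⟩
    · intro i j hne; exact (hZd i j hne).preimage _
    · intro i j hne; exact (hWd i j hne).preimage _
    · intro i j; exact (hZW i j).preimage _
    · intro i; exact pullback_connected hψinj hψadj hψcross hψclq (hZc i) (hZmeet i)
    · intro j; exact pullback_connected hψinj hψadj hψcross hψclq (hWc j) (hWmeet j)
    · intro i j
      obtain ⟨x, hx, y, hy, hxy⟩ := hadjZW i j
      by_cases hxV : x ∈ Set.range (emb (Bf := B) c0) <;>
        by_cases hyV : y ∈ Set.range (emb (Bf := B) c0)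
      · obtain ⟨v, rfl⟩ := hxV
        obtain ⟨w, rfl⟩ := hyV
        exact ⟨v, hx, w, hy, hψadj v w hxy⟩
      · -- x ∈ V1, y ∉ V1
        obtain ⟨b, hb, hxeq⟩ := adj_cross hxy.symm hyV hxV
        obtain ⟨yw, hywW, w, rfl⟩ := hWmeet j
        obtain ⟨u, hu, huW⟩ := pullback_cross hψinj hψadj hψcross hψclq (hWc j) hy hyV hywW
        have hbx : emb (Bf := B) c0 b = x := (emb_of_mem c0 hb).trans hxeq.symm
        have hbZ : emb (Bf := B) c0 b ∈ Z i := hbx ▸ hx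
        have hbu : b ≠ u := by
          intro h
          exact Set.disjoint_left.mp (hZW i j) hbZ (h ▸ huW)
        exact ⟨b, hbZ, u, huW, hψclq b (Finset.mem_coe.mpr hb) u hu hbu⟩
      · -- x ∉ V1, y ∈ V1
        obtain ⟨b, hb, hyeq⟩ := adj_cross hxy hxV hyV
        obtain ⟨zw, hzwZ, w, rfl⟩ := hZmeet i
        obtain ⟨u, hu, huZ⟩ := pullback_cross hψinj hψadj hψcross hψclq (hZc i) hx hxV hzwZ
        have hby : emb (Bf := B) c0 b = y := (emb_of_mem c0 hb).trans hyeq.symm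
        have hbW : emb (Bf := B) c0 b ∈ Wt j := hby ▸ hy
        have hbu : u ≠ b := by
          intro h
          exact Set.disjoint_left.mp (hZW i j) huZ (h ▸ hbW)
        exact ⟨u, huZ, b, hbW, hψclq u hu b (Finset.mem_coe.mpr hb) hbu⟩
      · -- both outside
        obtain ⟨zw, hzwZ, w, rfl⟩ := hZmeet i
        obtain ⟨u, hu, huZ⟩ := pullback_cross hψinj hψadj hψcross hψclq (hZc i) hx hxV hzwZ
        obtain ⟨yw, hywW, w', rfl⟩ := hWmeet j
        obtain ⟨u', hu', huW⟩ := pullback_cross hψinj hψadj hψcross hψclq (hWc j) hy hyV hywW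
        have huu : u ≠ u' := by
          intro h
          exact Set.disjoint_left.mp (hZW i j) huZ (h ▸ huW)
        exact ⟨u, huZ, u', huW, hψclq u hu u' hu' huu⟩
  · -- not k-choosable
    intro hch
    have hfilter : ∀ a : {x : Fin (m + n) // x ∉ B},
        B.card - e ≤ (B.filter (fun b => H.Adj a.val b)).card := by
      intro a
      have hsplit := Finset.card_filter_add_card_filter_not
        (s := B) (p := fun b => H.Adj a.val b)
      have hsub : ((B.filter (fun b => ¬ H.Adj a.val b)) : Set (Fin (m + n))) ⊆
          {u | u ≠ a.val ∧ ¬ H.Adj a.val u} := by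
        intro b hb
        rw [Finset.mem_coe, Finset.mem_filter] at hb
        exact ⟨fun h => a.2 (h ▸ hb.1), hb.2⟩
      have hle : (B.filter (fun b => ¬ H.Adj a.val b)).card ≤ e := by
        apply Nat.le_floor
        calc ((B.filter (fun b => ¬ H.Adj a.val b)).card : ℝ)
            = (((B.filter (fun b => ¬ H.Adj a.val b)) : Set (Fin (m + n))).ncard : ℝ) := by
              rw [Set.ncard_coe_finset]
          _ ≤ (({u | u ≠ a.val ∧ ¬ H.Adj a.val u}).ncard : ℝ) :=
              Nat.cast_le.mpr (Set.ncard_le_ncard hsub (Set.toFinite _))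
          _ ≤ ε / 2 * n := hnon a.val
      omega
    obtain ⟨ct, hct1, hct2⟩ := hch (LL H k m B)
      (LL_card H k m B e hfilter (by rw [hB]) hm1 (by rw [hB]; exact hen))
    set c0 : Col (m + n) k := mkCol hk1 (fun b => ct (Sum.inl b))
      (fun b => by have h := hct1 (Sum.inl b); rwa [LL_inl] at h) with hc0def
    have hfresh : ∀ (a : Fin (m + n)) (ha : a ∉ B),
        ct (Sum.inr (c0, ⟨a, ha⟩)) ∈ Finset.Ico ((m + n) * k) ((m + n) * k + (m - 1)) := by
      intro a ha
      have hmem := hct1 (Sum.inr (c0, ⟨a, ha⟩))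
      rw [LL_inr] at hmem
      rcases Finset.mem_union.mp hmem with h | h
      · exfalso
        obtain ⟨b, hbf, hbeq⟩ := Finset.mem_image.mp h
        rw [Finset.mem_filter] at hbf
        obtain ⟨hbB, hbadj⟩ := hbf
        have h1 : c0.val b = ct (Sum.inl ⟨b, hbB⟩) := mkCol_mem hk1 _ _ hbB
        have hadjG : (GG H k B).Adj (Sum.inl ⟨b, hbB⟩) (Sum.inr (c0, ⟨a, ha⟩)) := by
          rw [← emb_of_mem c0 hbB, ← emb_of_not_mem c0 ha]
          exact adj_emb.mpr hbadj.symm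
        exact hct2 _ _ hadjG (by rw [← h1, hbeq])
      · exact h
    have hmap : ∀ a ∈ A, ct (emb (Bf := B) c0 a) ∈
        Finset.Ico ((m + n) * k) ((m + n) * k + (m - 1)) := by
      intro a ha
      have haB : a ∉ B := fun h => Finset.disjoint_left.mp hAB ha h
      rw [emb_of_not_mem c0 haB]
      exact hfresh a haB
    have hinjA : Set.InjOn (fun a => ct (emb (Bf := B) c0 a)) ↑A := by
      intro a ha a' ha' heq
      by_contra hne
      have hadjH : H.Adj a a' := hAclq a (Finset.mem_coe.mp ha) a' (Finset.mem_coe.mp ha') hne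
      have hadjG : (GG H k B).Adj (emb c0 a) (emb c0 a') := adj_emb.mpr hadjH
      exact hct2 _ _ hadjG heq
    have hcard := Finset.card_le_card_of_injOn (fun a => ct (emb (Bf := B) c0 a)) hmap hinjA
    rw [hA, Nat.card_Ico] at hcard
    omega
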